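/- Let I be an ideal on ℕ, g:(0,∞)→(0,∞) strictly increasing with lim_{x→0+} g(x) = 0 and such that for every ε>0 there exists M with g(x)/g(εx) ≤ M for all x>0, and let (b_n), (c_n) be sequences of positive reals. Then the following are equivalent: (1) for every sequence (a_n) with values in the range of g, ∑ b_n a_n < ∞ implies that c_n·g^{-1}(a_n) I-converges to 0; (2) the summable ideal generated by (b_n·g(1/c_n)) is contained in I. -/

import Mathlib

open Filter Set

/-- Theorem (general I-test, doubling-like `g`): for an ideal `I`, a strictly increasing
`g : (0,∞) → (0,∞)` with `g(x) → 0` as `x → 0⁺` and such that for every `ε > 0` there is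
`M` with `g(x)/g(εx) ≤ M` for all `x > 0`, and positive sequences `(b n)`, `(c n)`,
the following are equivalent:
(1) for every sequence with values in the range of `g` (written as `g (t n)` with
`t n > 0`, so that `t n = g⁻¹(a n)`), convergence of `∑ b n * g (t n)` implies
`I`-convergence of `(c n * t n)` to `0`;
(2) the summable ideal generated by `(b n * g (1 / c n))` is contained in `I`. -/
theorem general_test_two (I : Set (Set ℕ))
    (hfin : ∀ A : Set ℕ, A.Finite → A ∈ I)
    (hsub : ∀ A B : Set ℕ, A ⊆ B → B ∈ I → A ∈ I)
    (hunion : ∀ A B : Set ℕ, A ∈ I → B ∈ I → A ∪ B ∈ I)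
    (huniv : (Set.univ : Set ℕ) ∉ I)
    (g : ℝ → ℝ) (hgpos : ∀ x > (0 : ℝ), 0 < g x) (hgmono : StrictMonoOn g (Set.Ioi 0))
    (hglim : Tendsto g (nhdsWithin 0 (Set.Ioi 0)) (nhds 0))
    (hgdoubling : ∀ ε > (0 : ℝ), ∃ M : ℝ, ∀ x > (0 : ℝ), g x / g (ε * x) ≤ M)
    (b c : ℕ → ℝ) (hb : ∀ n, 0 < b n) (hc : ∀ n, 0 < c n) :
    (∀ t : ℕ → ℝ, (∀ n, 0 < t n) → Summable (fun n => b n * g (t n)) →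
      ∀ ε > (0 : ℝ), {n : ℕ | ε ≤ |c n * t n|} ∈ I) ↔
    (∀ A : Set ℕ, Summable (A.indicator fun n : ℕ => b n * g (1 / c n)) → A ∈ I) := by
  classical
  constructor
  · intro h A hA
    have key : ∀ δ > (0:ℝ), ∃ x > (0:ℝ), g x < δ := by
      intro δ hδ
      have h1 : ∀ᶠ x in nhdsWithin 0 (Set.Ioi 0), g x < δ := hglim.eventually (gt_mem_nhds hδ)
      obtain ⟨x, hx1, hx2⟩ := (h1.and self_mem_nhdsWithin).exists
      exact ⟨x, hx2, hx1⟩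
    choose s hs1 hs2 using fun n => key ((1/2)^n / b n) (div_pos (by positivity) (hb n))
    set t : ℕ → ℝ := A.piecewise (fun n => 1 / c n) s with ht
    have htpos : ∀ n, 0 < t n := by
      intro n
      by_cases hn : n ∈ A
      · rw [ht, Set.piecewise_eq_of_mem _ _ _ hn]
        exact one_div_pos.mpr (hc n)
      · rw [ht, Set.piecewise_eq_of_notMem _ _ _ hn]
        exact hs1 n
    have hsum : Summable (fun n => b n * g (t n)) := by
      refine Summable.of_nonneg_of_le (g := fun n => b n * g (t n))
        (f := fun n => A.indicator (fun n => b n * g (1 / c n)) n + (1/2)^n) ?_ ?_ ?_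
      · intro n; exact le_of_lt (mul_pos (hb n) (hgpos _ (htpos n)))
      · intro n
        by_cases hn : n ∈ A
        · have h1 : t n = 1 / c n := by rw [ht]; exact Set.piecewise_eq_of_mem _ _ _ hn
          simp only [h1]
          rw [Set.indicator_of_mem hn]
          have h2 : (0:ℝ) ≤ (1/2)^n := by positivity
          linarith
        · have h1 : t n = s n := by rw [ht]; exact Set.piecewise_eq_of_notMem _ _ _ hn
          simp only [h1]
          rw [Set.indicator_of_notMem hn]
          have h2 : g (s n) < (1/2)^n / b n := hs2 n
          have h3 := hb n
          have h4 : b n * g (s n) ≤ b n * ((1/2)^n / b n) :=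
            mul_le_mul_of_nonneg_left (le_of_lt h2) (le_of_lt h3)
          have h5 : b n * ((1/2)^n / b n) = (1/2)^n := by field_simp
          linarith
      · exact hA.add (summable_geometric_of_lt_one (by norm_num) (by norm_num))
    have hS := h t htpos hsum 1 one_pos
    refine hsub A _ ?_ hS
    intro n hn
    have h1 : t n = 1 / c n := by rw [ht]; exact Set.piecewise_eq_of_mem _ _ _ hn
    have h2 : c n * t n = 1 := by
      rw [h1, mul_one_div, div_self (hc n).ne']
    simp only [Set.mem_setOf_eq, h2, abs_one, le_refl]
  · intro h t htpos hsum ε hε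
    obtain ⟨M, hM⟩ := hgdoubling ε hε
    set A : Set ℕ := {n : ℕ | ε ≤ |c n * t n|} with hAdef
    have hM0 : 0 < M := by
      have h1 := hM 1 one_pos
      have h2 := hgpos 1 one_pos
      have h3 := hgpos (ε * 1) (by simpa using hε)
      exact lt_of_lt_of_le (div_pos h2 h3) h1
    have key : ∀ n ∈ A, b n * g (1 / c n) ≤ M * (b n * g (t n)) := by
      intro n hn
      have hcn := hc n
      have hct : (0:ℝ) < c n * t n := mul_pos hcn (htpos n)
      have habs : |c n * t n| = c n * t n := abs_of_pos hct
      have hεct : ε ≤ c n * t n := by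
        have := hn
        rw [hAdef, Set.mem_setOf_eq, habs] at this
        exact this
      have htge : ε / c n ≤ t n := (div_le_iff₀' hcn).mpr hεct
      have hεc : (0:ℝ) < ε / c n := div_pos hε hcn
      have hmono : g (ε / c n) ≤ g (t n) := by
        rcases eq_or_lt_of_le htge with heq | hlt
        · rw [heq]
        · exact le_of_lt (hgmono hεc (htpos n) hlt)
      have hgd := hM (1 / c n) (by positivity)
      have hεq : ε * (1 / c n) = ε / c n := by ring
      rw [hεq] at hgd
      have hgpos2 : 0 < g (ε / c n) := hgpos _ hεc
      have h1 : g (1 / c n) ≤ M * g (ε / c n) := (div_le_iff₀ hgpos2).mp hgd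
      have h2 : g (1 / c n) ≤ M * g (t n) :=
        h1.trans (mul_le_mul_of_nonneg_left hmono (le_of_lt hM0))
      calc b n * g (1 / c n) ≤ b n * (M * g (t n)) :=
            mul_le_mul_of_nonneg_left h2 (le_of_lt (hb n))
        _ = M * (b n * g (t n)) := by ring
    apply h A
    refine Summable.of_nonneg_of_le
      (f := fun n => M * (b n * g (t n))) ?_ ?_ ?_
    · intro n
      by_cases hn : n ∈ A
      · rw [Set.indicator_of_mem hn]
        exact le_of_lt (mul_pos (hb n) (hgpos _ (one_div_pos.mpr (hc n))))
      · rw [Set.indicator_of_notMem hn]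
    · intro n
      by_cases hn : n ∈ A
      · rw [Set.indicator_of_mem hn]
        exact key n hn
      · rw [Set.indicator_of_notMem hn]
        exact le_of_lt (mul_pos hM0 (mul_pos (hb n) (hgpos _ (htpos n))))
    · exact hsum.mul_left M
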